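/- Let d ≥ 1 be an integer, let r be a real number with 0 < |r| < 1, let s be a real number with s·r ≥ 0, and let m₁, m₂ be positive real numbers. Suppose F is a real polynomial and α, β are real constants with F''(z) = (1 + r z)^{d−1} (2 d s r + (α z + β)(1 + r z)) for all real z, F(−1) = F(1) = 0, F'(−1) = 2(1−r)^d / m₂, and F'(1) = −2(1+r)^d / m₁. Then F(z) > 0 for all z ∈ (−1, 1). -/

import Mathlib

open Polynomial

/-- The boundary value problem characterizing the extremal polynomial of an
admissible Kähler class: the extremal ODE
`F''(z) = (1 + r z)^(d-1) (2 d s r + (α z + β)(1 + r z))`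
together with the endpoint conditions `F(±1) = 0`, `F'(-1) = 2(1-r)^d/m₂`,
`F'(1) = -2(1+r)^d/m₁`. -/
def ExtremalBVP (d : ℕ) (r s m₁ m₂ α β : ℝ) (F : Polynomial ℝ) : Prop :=
  (∀ z : ℝ, (derivative (derivative F)).eval z =
      (1 + r * z) ^ (d - 1) * (2 * (d : ℝ) * s * r + (α * z + β) * (1 + r * z))) ∧
  F.eval (-1) = 0 ∧ F.eval 1 = 0 ∧
  (derivative F).eval (-1) = 2 * (1 - r) ^ d / m₂ ∧
  (derivative F).eval 1 = -2 * (1 + r) ^ d / m₁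

/-- Mean value theorem for polynomials. -/
lemma poly_mvt (p : Polynomial ℝ) {a b : ℝ} (h : a < b) :
    ∃ c ∈ Set.Ioo a b, (derivative p).eval c = (p.eval b - p.eval a) / (b - a) :=
  exists_hasDerivAt_eq_slope _ _ h (p.continuousOn) (fun x _ => p.hasDerivAt x)

/-- A real quadratic which is negative at `a < c` and nonnegative at some `b ∈ (a, c)`
is concave and hence negative outside `[a, c]`. -/
lemma quad_neg_outside (A B C a b c t : ℝ) (hab : a < b) (hbc : b < c)
    (ha : A*a^2+B*a+C < 0) (hb : 0 ≤ A*b^2+B*b+C) (hc : A*c^2+B*c+C < 0)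
    (ht : t < a ∨ c < t) : A*t^2+B*t+C < 0 := by
  have hA : A < 0 := by
    by_contra h
    push_neg at h
    nlinarith [mul_neg_of_neg_of_pos ha (sub_pos.2 hbc),
      mul_neg_of_neg_of_pos hc (sub_pos.2 hab),
      mul_nonneg hb (sub_pos.2 (hab.trans hbc)).le,
      mul_nonneg h (mul_pos (mul_pos (sub_pos.2 hbc) (sub_pos.2 hab)) (sub_pos.2 (hab.trans hbc))).le]
  rcases ht with ht | ht
  · nlinarith [mul_pos (sub_pos.2 ht) (sub_pos.2 hab),
      mul_pos (mul_pos (sub_pos.2 ht) (sub_pos.2 hab)) (sub_pos.2 (ht.trans hab)),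
      mul_pos (neg_pos.2 hA) (mul_pos (mul_pos (sub_pos.2 ht) (sub_pos.2 hab)) (sub_pos.2 (ht.trans hab)))]
  · nlinarith [mul_pos (sub_pos.2 ht) (sub_pos.2 hbc),
      mul_pos (mul_pos (sub_pos.2 ht) (sub_pos.2 hbc)) (sub_pos.2 (hbc.trans ht)),
      mul_pos (neg_pos.2 hA) (mul_pos (mul_pos (sub_pos.2 ht) (sub_pos.2 hbc)) (sub_pos.2 (hbc.trans ht)))]

set_option maxHeartbeats 1000000 in
/-- If the base has nonnegative scalar curvature (`s * r ≥ 0`), then the extremal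
polynomial is strictly positive on `(-1, 1)`. -/
theorem extremal_polynomial_pos_of_nonneg_scalar (d : ℕ) (hd : 1 ≤ d) (r s m₁ m₂ : ℝ)
    (hr0 : 0 < |r|) (hr1 : |r| < 1) (hsr : 0 ≤ s * r) (hm₁ : 0 < m₁) (hm₂ : 0 < m₂)
    (α β : ℝ) (F : Polynomial ℝ) (hF : ExtremalBVP d r s m₁ m₂ α β F) :
    ∀ z : ℝ, -1 < z → z < 1 → 0 < F.eval z := by
  intro z hz1 hz2
  by_contra hle
  push_neg at hle
  obtain ⟨heq, hFm1, hF1, hDm1, hD1⟩ := hF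
  obtain ⟨hrl, hrr⟩ := abs_lt.mp hr1
  have hrne : r ≠ 0 := fun h => by simp [h] at hr0
  -- endpoint derivative signs
  have h1mr : (0:ℝ) < 1 - r := by linarith
  have h1pr : (0:ℝ) < 1 + r := by linarith
  have hD'm1 : 0 < (derivative F).eval (-1) := by rw [hDm1]; positivity
  have hD'1 : (derivative F).eval 1 < 0 := by
    rw [hD1]
    have h : 0 < 2 * (1 + r) ^ d / m₁ := by positivity
    have e : -2 * (1 + r) ^ d / m₁ = -(2 * (1 + r) ^ d / m₁) := by ring
    linarith [e.ge, e.le]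
  -- MVT points
  obtain ⟨u, hu, huv⟩ := poly_mvt F hz1
  obtain ⟨v, hv, hvv⟩ := poly_mvt F hz2
  have hFu : (derivative F).eval u ≤ 0 := by
    rw [huv, hFm1]
    apply div_nonpos_of_nonpos_of_nonneg <;> linarith
  have hFv : 0 ≤ (derivative F).eval v := by
    rw [hvv, hF1]
    apply div_nonneg <;> linarith
  have huv' : u < v := hu.2.trans hv.1
  obtain ⟨a, ha, hav⟩ := poly_mvt (derivative F) (show (-1:ℝ) < u from hu.1)
  obtain ⟨b, hb, hbv⟩ := poly_mvt (derivative F) huv'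
  obtain ⟨c, hc, hcv⟩ := poly_mvt (derivative F) (show v < 1 from hv.2)
  have hFa : (derivative (derivative F)).eval a < 0 := by
    rw [hav]
    apply div_neg_of_neg_of_pos <;> linarith [hu.1]
  have hFb : 0 ≤ (derivative (derivative F)).eval b := by
    rw [hbv]
    apply div_nonneg <;> linarith
  have hFc : (derivative (derivative F)).eval c < 0 := by
    rw [hcv]
    apply div_neg_of_neg_of_pos <;> linarith [hv.2]
  -- bounds on a,b,c
  have ha1 : -1 < a := ha.1
  have ha2 : a < 1 := by linarith [ha.2, hu.2, hv.2]
  have hb1 : -1 < b := by linarith [hb.1, hu.1]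
  have hb2 : b < 1 := by linarith [hb.2, hv.2]
  have hc1 : -1 < c := by linarith [hc.1, hu.1]
  have hc2 : c < 1 := hc.2
  have hab : a < b := ha.2.trans hb.1
  have hbc : b < c := hb.2.trans hc.1
  -- positivity of (1 + r x)^(d-1) on (-1,1)
  have hpow : ∀ x : ℝ, -1 < x → x < 1 → 0 < (1 + r * x) ^ (d - 1) := by
    intro x h1 h2
    have : 0 < 1 + r * x := by nlinarith
    positivity
  -- translate to the quadratic G(x) = (αr)x² + (α+βr)x + (β+2dsr)
  have hG : ∀ x : ℝ, -1 < x → x < 1 →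
      (α*r)*x^2 + (α+β*r)*x + (β+2*(d:ℝ)*s*r) =
        (derivative (derivative F)).eval x / (1 + r*x)^(d-1) := by
    intro x h1 h2
    rw [heq x]
    field_simp [(hpow x h1 h2).ne']
    ring
  have hga : (α*r)*a^2 + (α+β*r)*a + (β+2*(d:ℝ)*s*r) < 0 := by
    rw [hG a ha1 ha2]
    exact div_neg_of_neg_of_pos hFa (hpow a ha1 ha2)
  have hgb : 0 ≤ (α*r)*b^2 + (α+β*r)*b + (β+2*(d:ℝ)*s*r) := by
    rw [hG b hb1 hb2]
    exact div_nonneg hFb (hpow b hb1 hb2).le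
  have hgc : (α*r)*c^2 + (α+β*r)*c + (β+2*(d:ℝ)*s*r) < 0 := by
    rw [hG c hc1 hc2]
    exact div_neg_of_neg_of_pos hFc (hpow c hc1 hc2)
  -- evaluate the quadratic at t = -1/r, where it equals 2 d s r ≥ 0
  set t : ℝ := -1/r with htdef
  have htval : (α*r)*t^2 + (α+β*r)*t + (β+2*(d:ℝ)*s*r) = 2*(d:ℝ)*s*r := by
    rw [htdef]
    field_simp
    ring
  have htout : t < a ∨ c < t := by
    rcases lt_or_gt_of_ne hrne with hneg | hpos
    · right
      have h1 : 1 < 1 / (-r) := (one_lt_div (by linarith)).mpr (by linarith)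
      have h2 : t = 1 / (-r) := by rw [htdef]; ring
      linarith
    · left
      have h1 : 1 < 1 / r := (one_lt_div hpos).mpr (by linarith)
      have h2 : t = -(1 / r) := by rw [htdef]; ring
      linarith
  have := quad_neg_outside (α*r) (α+β*r) (β+2*(d:ℝ)*s*r) a b c t hab hbc hga hgb hgc htout
  rw [htval] at this
  have hdc : (1:ℝ) ≤ (d:ℝ) := by exact_mod_cast hd
  nlinarith [hsr, hdc]
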